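/- For two action profiles s, t at Hamming distance at least 2 in the binary hypercube, the indicator random variables 1{s is a pure Nash equilibrium} and 1{t is a pure Nash equilibrium} are independent. -/

import Mathlib

open MeasureTheory ProbabilityTheory
open scoped Classical

lemma ham_le_one_of_agree_off {N : ℕ} (s t : Fin N → Bool) (j : Fin N)
    (h : ∀ i, i ≠ j → s i = t i) : hammingDist s t ≤ 1 := by
  have hsub : ({i | s i ≠ t i} : Finset (Fin N)) ⊆ {j} := by
    intro i hi
    simp only [Finset.mem_filter, Finset.mem_univ, true_and] at hi
    simp only [Finset.mem_singleton]
    by_contra hij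
    exact hi (h i hij)
  calc hammingDist s t = ({i | s i ≠ t i} : Finset (Fin N)).card := rfl
    _ ≤ ({j} : Finset (Fin N)).card := Finset.card_le_card hsub
    _ = 1 := Finset.card_singleton j

/-- For two action profiles at Hamming distance at least 2, the indicator random variables
of the events "is a pure Nash equilibrium" are independent. -/
theorem indep_PNE_indicators_of_hammingDist_ge_two (Ω : Type*) [MeasurableSpace Ω]
    (μ : Measure Ω) [IsProbabilityMeasure μ] (N : ℕ)
    (Z : (Fin N × (Fin N → Bool)) → Ω → ℝ)
    (hmeas : ∀ p, Measurable (Z p))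
    (hindep : iIndepFun Z μ)
    (hident : ∀ p q, IdentDistrib (Z p) (Z q) μ μ)
    (s t : Fin N → Bool) (hdist : 2 ≤ hammingDist s t) :
    IndepFun
      (fun ω => if ∀ i : Fin N, Z (i, Function.update s i (!s i)) ω ≤ Z (i, s) ω
        then (1 : ℝ) else 0)
      (fun ω => if ∀ i : Fin N, Z (i, Function.update t i (!t i)) ω ≤ Z (i, t) ω
        then (1 : ℝ) else 0) μ := by
  set S : Finset (Fin N × (Fin N → Bool)) :=
    Finset.univ.image (fun i => (i, s)) ∪
      Finset.univ.image (fun i => (i, Function.update s i (!s i))) with hS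
  set T : Finset (Fin N × (Fin N → Bool)) :=
    Finset.univ.image (fun i => (i, t)) ∪
      Finset.univ.image (fun i => (i, Function.update t i (!t i))) with hT
  have hst : s ≠ t := by
    intro h; rw [h, hammingDist_self] at hdist; omega
  have hle1 : ¬ hammingDist s t ≤ 1 := by omega
  have hST : Disjoint S T := by
    rw [Finset.disjoint_left]
    intro p hp hq
    simp only [hS, hT, Finset.mem_union, Finset.mem_image, Finset.mem_univ, true_and] at hp hq
    obtain ⟨i, hi⟩ | ⟨i, hi⟩ := hp <;> obtain ⟨j, hj⟩ | ⟨j, hj⟩ := hq <;>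
      rw [← hj] at hi <;>
      obtain ⟨hij, hfun⟩ := Prod.mk.injEq .. ▸ hi
    · exact hst hfun
    · refine hle1 (ham_le_one_of_agree_off s t j fun k hk => ?_)
      have := congrFun hfun k
      rwa [Function.update_of_ne hk] at this
    · refine hle1 (ham_le_one_of_agree_off s t i fun k hk => ?_)
      have := congrFun hfun k
      rwa [Function.update_of_ne hk] at this
    · subst hij
      refine hle1 (ham_le_one_of_agree_off s t i fun k hk => ?_)
      have := congrFun hfun k
      rwa [Function.update_of_ne hk, Function.update_of_ne hk] at this
  have hmemS1 : ∀ i : Fin N, (i, s) ∈ S := fun i => by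
    simp [hS]
  have hmemS2 : ∀ i : Fin N, (i, Function.update s i (!s i)) ∈ S := fun i => by
    simp [hS]
  have hmemT1 : ∀ i : Fin N, (i, t) ∈ T := fun i => by
    simp [hT]
  have hmemT2 : ∀ i : Fin N, (i, Function.update t i (!t i)) ∈ T := fun i => by
    simp [hT]
  set φs : (↥S → ℝ) → ℝ := fun g =>
    if ∀ i : Fin N, g ⟨(i, Function.update s i (!s i)), hmemS2 i⟩ ≤ g ⟨(i, s), hmemS1 i⟩
      then (1 : ℝ) else 0 with hφsdef
  set φt : (↥T → ℝ) → ℝ := fun g =>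
    if ∀ i : Fin N, g ⟨(i, Function.update t i (!t i)), hmemT2 i⟩ ≤ g ⟨(i, t), hmemT1 i⟩
      then (1 : ℝ) else 0 with hφtdef
  have hφs : Measurable φs := by
    refine Measurable.ite ?_ measurable_const measurable_const
    have : {g : ↥S → ℝ | ∀ i : Fin N,
        g ⟨(i, Function.update s i (!s i)), hmemS2 i⟩ ≤ g ⟨(i, s), hmemS1 i⟩} =
        ⋂ i : Fin N, {g : ↥S → ℝ |
          g ⟨(i, Function.update s i (!s i)), hmemS2 i⟩ ≤ g ⟨(i, s), hmemS1 i⟩} := by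
      ext g; simp [Set.mem_iInter]
    rw [this]
    exact MeasurableSet.iInter fun i =>
      measurableSet_le (measurable_pi_apply _) (measurable_pi_apply _)
  have hφt : Measurable φt := by
    refine Measurable.ite ?_ measurable_const measurable_const
    have : {g : ↥T → ℝ | ∀ i : Fin N,
        g ⟨(i, Function.update t i (!t i)), hmemT2 i⟩ ≤ g ⟨(i, t), hmemT1 i⟩} =
        ⋂ i : Fin N, {g : ↥T → ℝ |
          g ⟨(i, Function.update t i (!t i)), hmemT2 i⟩ ≤ g ⟨(i, t), hmemT1 i⟩} := by
      ext g; simp [Set.mem_iInter]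
    rw [this]
    exact MeasurableSet.iInter fun i =>
      measurableSet_le (measurable_pi_apply _) (measurable_pi_apply _)
  have h := (hindep.indepFun_finset S T hST hmeas).comp hφs hφt
  exact h
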